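/- Let h : A → B be a morphism of dg algebras with restriction functor h_* : D(B) → D(A) and induction h^* = − ⊗^L_A B. Let T_h denote the cone of h in the derived category of A-bimodules. For a B-module x, set x_0 = x and define inductively x_k to be the cone of the counit h^* h_*(x_{k−1}) → x_{k−1} in D(B). Then h_*(x_n) ≅ h_*(x) ⊗^L_A T_h^{⊗n}[n] in D(A), where T_h^{⊗n} is the n-fold derived tensor product of T_h over A. -/

import Mathlib

open CategoryTheory CategoryTheory.Limits CategoryTheory.Pretriangulated

universe v u

namespace PaperGD

variable {C : Type u} [Category.{v} C] [Preadditive C] [HasZeroObject C] [HasShift C ℤ]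
  [∀ n : ℤ, (CategoryTheory.shiftFunctor C n).Additive] [Pretriangulated C]

/-- `Hom_T(x,y) = 0`. -/
def HomZero (x y : C) : Prop := ∀ f : x ⟶ y, f = 0

/-- `pd_H w ≤ n` : vanishing of `Hom(w, h[m])` for all `h ∈ H`, `m > n`. -/
def pdLE (H : Set C) (w : C) (n : ℤ) : Prop :=
  ∀ h ∈ H, ∀ m : ℤ, n < m → HomZero w (h⟦m⟧)

/-- `gd_H T ≤ n`. -/
def gdLE (H : Set C) (n : ℤ) : Prop := ∀ x ∈ H, pdLE H x n

/-- canonical map `⨁ᵢ Hom(M, f i) → Hom(M, ∐ f)`. -/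
noncomputable def coprodHom (M : C) {ι : Type v} [DecidableEq ι] (f : ι → C)
    [HasCoproduct f] : DirectSum ι (fun i => (M ⟶ f i)) →+ (M ⟶ ∐ f) :=
  DirectSum.toAddMonoid fun i =>
    AddMonoidHom.mk' (fun g => g ≫ Sigma.ι f i) (fun _ _ => by simp [Preadditive.add_comp])

/-- compactness: `Hom(M,-)` commutes with coproducts. -/
def IsCompactObj (M : C) : Prop :=
  ∀ (ι : Type v) (f : ι → C) [DecidableEq ι] [HasCoproduct f],
    Function.Bijective (coprodHom M f)

/-- the smallest thick subcategory containing `M`. -/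
inductive ThickOf (M : C) : C → Prop
  | base : ThickOf M M
  | zero (x : C) : Limits.IsZero x → ThickOf M x
  | shift (x : C) (n : ℤ) : ThickOf M x → ThickOf M (x⟦n⟧)
  | ext (T : Triangle C) : (T ∈ distTriang C) → ThickOf M T.obj₁ → ThickOf M T.obj₂ →
      ThickOf M T.obj₃
  | retract (x y : C) (i : y ⟶ x) (p : x ⟶ y) : i ≫ p = 𝟙 y → ThickOf M x → ThickOf M y

/-- `M` is a compact silting object: compact, no positive self-extensions, and it
generates the compacts as a thick subcategory. -/
structure IsCompactSilting (M : C) : Prop where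
  compact : IsCompactObj M
  orth : ∀ n : ℤ, 0 < n → HomZero M (M⟦n⟧)
  thick_eq : ∀ x : C, ThickOf M x ↔ IsCompactObj x

/-- the heart `M^{⊥_{≠0}}` of the silting t-structure. -/
def siltHeart (M : C) : Set C := {y | ∀ n : ℤ, n ≠ 0 → HomZero M (y⟦n⟧)}

/-- the aisle `M^{⊥_{>0}}`. -/
def siltAisle (M : C) : Set C := {y | ∀ n : ℤ, 0 < n → HomZero M (y⟦n⟧)}

/-- the coaisle `M^{⊥_{≤0}}`. -/
def siltCoaisle (M : C) : Set C := {y | ∀ n : ℤ, n ≤ 0 → HomZero M (y⟦n⟧)}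

/-- `T` is compactly generated. -/
def CompactlyGenerated (C : Type u) [Category.{v} C] [Preadditive C] [HasZeroObject C]
    [HasShift C ℤ] [∀ n : ℤ, (CategoryTheory.shiftFunctor C n).Additive] [Pretriangulated C] :
    Prop :=
  ∀ y : C, (∀ x : C, IsCompactObj x → ∀ n : ℤ, HomZero x (y⟦n⟧)) → Limits.IsZero y

/-- bounded objects `T^b = (T^c)^⋇`. -/
def Bounded (t : C) : Prop :=
  ∀ x : C, IsCompactObj x → ∃ N : ℕ, ∀ n : ℤ, (N : ℤ) ≤ |n| → HomZero x (t⟦n⟧)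

/-- `x ∈ Add s` : summand of a coproduct of copies of `s`. -/
def InAdd (s x : C) : Prop :=
  ∃ (ι : Type v) (_ : HasCoproduct (fun _ : ι => s)) (i : x ⟶ ∐ (fun _ : ι => s))
    (p : (∐ (fun _ : ι => s)) ⟶ x), i ≫ p = 𝟙 x

/-- `x ∈ add s` : summand of a finite coproduct of copies of `s`. -/
def InAddFin (s x : C) : Prop :=
  ∃ (n : ℕ) (_ : HasCoproduct (fun _ : Fin n => s)) (i : x ⟶ ∐ (fun _ : Fin n => s))
    (p : (∐ (fun _ : Fin n => s)) ⟶ x), i ≫ p = 𝟙 x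

/-- finite filtrations (in the heart `H`) with quotients satisfying `P`,
encoded by triangles `s₁ → x → x₁ → s₁[1]`. -/
inductive FiltBy (H : Set C) (P : C → Prop) : ℕ → C → Prop
  | zero (x : C) : P x → FiltBy H P 0 x
  | succ (n : ℕ) (T : Triangle C) : (T ∈ distTriang C) → P T.obj₁ → T.obj₃ ∈ H →
      FiltBy H P n T.obj₃ → FiltBy H P (n + 1) T.obj₂

/-- the class `Add M ∗ Add M[1] ∗ ⋯ ∗ Add M[d]`. -/
inductive AddStar (M : C) : ℕ → C → Prop
  | zero (x : C) : InAdd M x → AddStar M 0 x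
  | succ (d : ℕ) (T : Triangle C) (w : C) : (T ∈ distTriang C) → InAdd M T.obj₁ →
      AddStar M d w → Nonempty (T.obj₃ ≅ w⟦(1 : ℤ)⟧) → AddStar M (d + 1) T.obj₂

/-- `Hom_T(x,-)` restricted to `H` commutes with coproducts. -/
def HomPreservesCoprodsOn (H : Set C) (x : C) : Prop :=
  ∀ (ι : Type v) (h : ι → C) [DecidableEq ι] [HasCoproduct h],
    (∀ i, h i ∈ H) → Function.Bijective (coprodHom x h)

/-- a t-structure `(U,V)` (as a torsion pair with `U[1] ⊆ U`). -/
structure TStruct (C : Type u) [Category.{v} C] [Preadditive C] [HasZeroObject C]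
    [HasShift C ℤ] [∀ n : ℤ, (CategoryTheory.shiftFunctor C n).Additive] [Pretriangulated C] where
  U : Set C
  V : Set C
  U_eq : U = {x | ∀ v ∈ V, HomZero x v}
  V_eq : V = {y | ∀ u ∈ U, HomZero u y}
  decomp : ∀ x : C, ∃ (u v : C) (f : u ⟶ x) (g : x ⟶ v) (h : v ⟶ u⟦(1 : ℤ)⟧),
      (Triangle.mk f g h ∈ distTriang C) ∧ u ∈ U ∧ v ∈ V
  shift_le : ∀ u ∈ U, u⟦(1 : ℤ)⟧ ∈ U

/-- the heart `H = U ∩ V[1]` of a t-structure. -/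
def TStruct.heart (t : TStruct C) : Set C := {x | x ∈ t.U ∧ x⟦(-1 : ℤ)⟧ ∈ t.V}


/-- An abstract model of the derived category `D(A)` of a connective dg algebra `A`:
a compactly generated triangulated category together with its canonical compact silting
generator `A` (connectivity of the dg algebra corresponds exactly to `A` being silting).
The aisle `siltAisle A` is `D^{≤0}(A)`, the heart `siltHeart A` is `Mod H^0(A)`,
and `Bounded` is `D^b(A)`. -/
structure DGSetup (C : Type u) [Category.{v} C] [Preadditive C] [HasZeroObject C]
    [HasShift C ℤ] [∀ n : ℤ, (CategoryTheory.shiftFunctor C n).Additive] [Pretriangulated C] where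
  A : C
  silting : IsCompactSilting A
  gen : ∀ y : C, (∀ n : ℤ, HomZero A (y⟦n⟧)) → Limits.IsZero y

/-- `n`-fold composite of an endofunctor (modelling the `n`-fold derived tensor power of
a bimodule via its associated tensor endofunctor). -/
def funPow {D : Type u} [Category.{v} D] (T : D ⥤ D) : ℕ → (D ⥤ D)
  | 0 => 𝟭 D
  | (n + 1) => funPow T n ⋙ T

variable {CB : Type u} [Category.{v} CB] [Preadditive CB] [HasZeroObject CB] [HasShift CB ℤ]
  [∀ n : ℤ, (CategoryTheory.shiftFunctor CB n).Additive] [Pretriangulated CB]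

/-- If `u : X ⟶ Y` fits in a distinguished triangle `X ⟶ Y ⟶ Z ⟶ X⟦1⟧` and has a
retraction `r`, then the cone of `r` is `Z⟦1⟧`. -/
lemma cone_of_retraction {X Y Z R : C} (u : X ⟶ Y) (e : Y ⟶ Z) (d : Z ⟶ X⟦(1 : ℤ)⟧)
    (hT1 : Triangle.mk u e d ∈ distTriang C)
    (r : Y ⟶ X) (hr : u ≫ r = 𝟙 X)
    (g : X ⟶ R) (w : R ⟶ Y⟦(1 : ℤ)⟧)
    (hT2 : Triangle.mk r g w ∈ distTriang C) :
    Nonempty (R ≅ Z⟦(1 : ℤ)⟧) := by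
  have hue : u ≫ e = 0 := comp_distTriang_mor_zero₁₂ _ hT1
  have hd : d = 0 := by
    have h1 : d ≫ u⟦(1 : ℤ)⟧' = 0 := comp_distTriang_mor_zero₃₁ _ hT1
    have : d ≫ u⟦(1 : ℤ)⟧' ≫ r⟦(1 : ℤ)⟧' = d := by
      rw [← Functor.map_comp, hr, CategoryTheory.Functor.map_id, Category.comp_id]
    rw [← this, reassoc_of% h1, zero_comp]
  -- a section of e
  obtain ⟨s, hs⟩ : ∃ s : Z ⟶ Y, 𝟙 Z = s ≫ e :=
    Triangle.coyoneda_exact₃ _ hT1 (𝟙 Z) (by rw [hd]; exact comp_zero)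
  set s' : Z ⟶ Y := s - s ≫ r ≫ u with hs'
  have hs'e : s' ≫ e = 𝟙 Z := by
    simp only [hs', Preadditive.sub_comp, Category.assoc, hue, comp_zero, sub_zero]
    exact hs.symm
  have hs'r : s' ≫ r = 0 := by
    simp only [hs', Preadditive.sub_comp, Category.assoc, hr, Category.comp_id, sub_self]
  -- the comparison map Y ⟶ Z ⊞ X is an isomorphism
  set φ : Y ⟶ Z ⊞ X := biprod.lift e r with hφ
  set ψ : Z ⊞ X ⟶ Y := biprod.desc s' u with hψ
  have hψφ : ψ ≫ φ = 𝟙 (Z ⊞ X) := by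
    ext <;> simp [hψ, hφ, hs'e, hs'r, hue, hr]
  have hφψ : φ ≫ ψ = 𝟙 Y := by
    have key : e ≫ s' + r ≫ u = 𝟙 Y := by
      set θ : Y ⟶ Y := 𝟙 Y - (e ≫ s' + r ≫ u) with hθ
      have hθe : θ ≫ e = 0 := by
        simp only [hθ, Preadditive.sub_comp, Preadditive.add_comp, Category.assoc,
          hs'e, Category.comp_id, hue, comp_zero, add_zero, Category.id_comp, sub_self]
      obtain ⟨c, hc⟩ : ∃ c : Y ⟶ X, θ = c ≫ u := Triangle.coyoneda_exact₂ _ hT1 θ hθe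
      have hθr : θ ≫ r = 0 := by
        simp only [hθ, Preadditive.sub_comp, Preadditive.add_comp, Category.assoc,
          hs'r, comp_zero, zero_add, hr, Category.comp_id, Category.id_comp, sub_self]
      have hc0 : c = 0 := by
        have := hθr
        rw [hc, Category.assoc, hr, Category.comp_id] at this
        exact this
      have : θ = 0 := by rw [hc, hc0, zero_comp]
      rw [hθ] at this
      linear_combination (norm := abel) -this
    calc φ ≫ ψ = e ≫ s' + r ≫ u := by simp [hφ, hψ]
    _ = 𝟙 Y := key
  have : IsIso φ := ⟨ψ, hφψ, hψφ⟩
  -- the rotated biproduct triangle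
  have hT3 : Triangle.mk (biprod.snd : Z ⊞ X ⟶ X) (0 : X ⟶ Z⟦(1 : ℤ)⟧)
      (-(biprod.inl : Z ⟶ Z ⊞ X)⟦(1 : ℤ)⟧') ∈ distTriang C :=
    rot_of_distTriang _ (binaryBiproductTriangle_distinguished Z X)
  have comm : (Triangle.mk r g w).mor₁ ≫ (Iso.refl X).hom =
      (asIso φ).hom ≫ (Triangle.mk (biprod.snd : Z ⊞ X ⟶ X) (0 : X ⟶ Z⟦(1 : ℤ)⟧)
        (-(biprod.inl : Z ⟶ Z ⊞ X)⟦(1 : ℤ)⟧')).mor₁ := by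
    simp [hφ]
    exact (Category.comp_id _).trans (biprod.lift_snd _ _).symm
  exact ⟨Triangle.π₃.mapIso (isoTriangleOfIso₁₂ _ _ hT2 hT3 (@asIso _ _ _ _ φ this) (Iso.refl X) comm)⟩

/-- for a morphism `h : A → B` of dg algebras with
induction–restriction adjunction `(h^* = ind) ⊣ (h_* = res)`, where the bimodule
`T_h = cone(h)` is modelled by its tensor endofunctor `T` together with the natural
triangles `z → z ⊗^L_A B → z ⊗^L_A T_h → z[1]` (the first map being the unit),
if `x_k` is the iterated cone of the counit `h^* h_* x_{k-1} → x_{k-1}` starting at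
`x_0 = x`, then `h_*(x_n) ≅ h_*(x) ⊗^L_A T_h^{⊗n} [n]`. -/
theorem res_of_iterated_counit_cone
    (SA : DGSetup C) (SB : DGSetup CB)
    (res : CB ⥤ C) [res.CommShift ℤ] [res.IsTriangulated]
    (ind : C ⥤ CB) [ind.CommShift ℤ] [ind.IsTriangulated]
    (adj : ind ⊣ res) (hind : Nonempty (ind.obj SA.A ≅ SB.A))
    (T : C ⥤ C) [T.CommShift ℤ] [T.IsTriangulated]
    (ε : ind ⋙ res ⟶ T) (δ : T ⟶ CategoryTheory.shiftFunctor C (1 : ℤ))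
    (hT : ∀ z : C, Triangle.mk (adj.unit.app z) (ε.app z) (δ.app z) ∈ distTriang C)
    (x : CB) (xs : ℕ → CB) (h0 : xs 0 = x)
    (g : ∀ k : ℕ, xs k ⟶ xs (k + 1))
    (w : ∀ k : ℕ, xs (k + 1) ⟶ (ind.obj (res.obj (xs k)))⟦(1 : ℤ)⟧)
    (hcone : ∀ k : ℕ, Triangle.mk (adj.counit.app (xs k)) (g k) (w k) ∈ distTriang CB) :
    ∀ n : ℕ, Nonempty (res.obj (xs n) ≅ ((funPow T n).obj (res.obj x))⟦(n : ℤ)⟧) := by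
  intro n
  induction n with
  | zero =>
    exact ⟨eqToIso (by rw [h0]; rfl) ≪≫ ((shiftFunctorZero C ℤ).app (res.obj x)).symm⟩
  | succ k ih =>
    obtain ⟨ek⟩ := ih
    have hmap := res.map_distinguished _ (hcone k)
    obtain ⟨c⟩ := cone_of_retraction (adj.unit.app (res.obj (xs k)))
      (ε.app (res.obj (xs k))) (δ.app (res.obj (xs k))) (hT _)
      (res.map (adj.counit.app (xs k))) (adj.right_triangle_components _)
      (res.map (g k)) (res.map (w k) ≫ (res.commShiftIso (1 : ℤ)).hom.app _) hmap
    refine ⟨c ≪≫ (shiftFunctor C (1 : ℤ)).mapIso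
      (T.mapIso ek ≪≫ (T.commShiftIso (k : ℤ)).app ((funPow T k).obj (res.obj x))) ≪≫
      ((shiftFunctorAdd' C (k : ℤ) (1 : ℤ) ((k + 1 : ℕ) : ℤ) (by push_cast; ring)).app
        ((funPow T (k + 1)).obj (res.obj x))).symm⟩

end PaperGD
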